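/- Let d ≥ 1, m ≥ 0 and let N be an integer with N_m^{(d)} ≤ N ≤ N_{m+1}^{(d)}, where N_m^{(d)} = C(m+d, d). Then the degree of the Vandermonde-type determinant satisfies 𝒱_d(N) = N(m+1) − ((m+d+1)/(d+1))·N_m^{(d)}. -/

import Mathlib

open scoped BigOperators ENNReal NNReal
open MeasureTheory

noncomputable section

/-- `degLexLt α β` means that the monic monomial with exponent vector `α` precedes the one
with exponent vector `β` in the enumeration of the monic monomials in `d` variables:
first by increasing total degree, and within equal total degree lexicographically with
`t₁` coming first (so `t₁` precedes `t₂`, …, i.e. a larger power of an earlier variable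
comes first). -/
def degLexLt {d : ℕ} (α β : Fin d → ℕ) : Prop :=
  (∑ j, α j) < (∑ j, β j) ∨
    ((∑ j, α j) = (∑ j, β j) ∧ ∃ i : Fin d, (∀ j, j < i → α j = β j) ∧ β i < α i)

/-- The 0-based position of the monomial with exponent vector `α` in this enumeration. -/
def monRank (d : ℕ) (α : Fin d → ℕ) : ℕ :=
  Nat.card {β : Fin d → ℕ // degLexLt β α}

/-- `monExp d i` is the exponent vector of `φ_{i+1}^{(d)}`, the `(i+1)`-st monic monomial
in `d` variables in the above enumeration (so `monExp d 0 = 0` corresponds to `φ₁ = 1`). -/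
noncomputable def monExp (d : ℕ) : ℕ → Fin d → ℕ :=
  Function.invFun (monRank d)

/-- The Vandermonde-type determinant `ψ_N^{(d)}(x₁,…,x_N) = det (φ_i^{(d)}(x_j))_{i,j=1}^N`,
viewed as a polynomial in the `d·N` variables `x_{jk}` (`j` indexes the block, `k` the
coordinate inside a block). -/
noncomputable def psi (d N : ℕ) : MvPolynomial (Fin N × Fin d) ℝ :=
  Matrix.det (Matrix.of fun i j : Fin N =>
    ∏ k : Fin d, (MvPolynomial.X (j, k) : MvPolynomial (Fin N × Fin d) ℝ) ^ monExp d (i : ℕ) k)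

/-- `𝒱_d(N)`, the total degree of the Vandermonde-type determinant `ψ_N^{(d)}`. -/
noncomputable def degV (d N : ℕ) : ℕ := (psi d N).totalDegree


section Counting


lemma card_toMult {D : ℕ} (f : Fin D → ℕ) :
    Multiset.card (Finsupp.toMultiset (Finsupp.equivFunOnFinite.symm f)) = ∑ j, f j := by
  rw [Finsupp.card_toMultiset, Finsupp.sum_fintype _ _ (fun _ => rfl)]
  rfl

def symEquiv (D m : ℕ) : {γ : Fin D → ℕ // (∑ j, γ j) = m} ≃ Sym (Fin D) m where
  toFun γ := ⟨Finsupp.toMultiset (Finsupp.equivFunOnFinite.symm γ.1), by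
    rw [card_toMult]; exact γ.2⟩
  invFun s := ⟨fun j => Multiset.count j s.1, by
    have h1 : Finsupp.toMultiset (Finsupp.equivFunOnFinite.symm
        (fun j => Multiset.count j s.1)) = s.1 := by
      ext a
      simp [Finsupp.count_toMultiset]
    have := card_toMult (D := D) (fun j => Multiset.count j s.1)
    rw [h1] at this
    rw [← this]
    exact s.2⟩
  left_inv γ := by
    ext j
    simp [Finsupp.count_toMultiset]
  right_inv s := by
    apply Subtype.ext
    show Finsupp.toMultiset _ = s.1
    ext a
    simp [Finsupp.count_toMultiset]

def slackEquiv (d m : ℕ) :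
    {β : Fin d → ℕ // (∑ j, β j) ≤ m} ≃ {γ : Fin (d + 1) → ℕ // (∑ j, γ j) = m} where
  toFun β := ⟨Fin.cons (m - ∑ j, β.1 j) β.1, by
    rw [Fin.sum_cons]
    have := β.2
    omega⟩
  invFun γ := ⟨Fin.tail γ.1, by
    have := γ.2
    rw [Fin.sum_univ_succ] at this
    have h2 : ∑ j : Fin d, Fin.tail γ.1 j = ∑ i : Fin d, γ.1 i.succ := rfl
    omega⟩
  left_inv β := by
    ext j
    simp [Fin.tail_cons]
  right_inv γ := by
    apply Subtype.ext
    have h0 : γ.1 0 + ∑ j, Fin.tail γ.1 j = m := by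
      have := γ.2
      rw [Fin.sum_univ_succ] at this
      exact this
    funext j
    refine Fin.cases ?_ ?_ j
    · show m - (∑ j, Fin.tail γ.1 j) = γ.1 0
      omega
    · intro i
      simp [Fin.tail]
  
lemma card_degLe (d m : ℕ) :
    Nat.card {β : Fin d → ℕ // (∑ j, β j) ≤ m} = (m + d).choose d := by
  rw [Nat.card_congr ((slackEquiv d m).trans (symEquiv (d+1) m)),
    Nat.card_eq_fintype_card, Sym.card_sym_eq_choose]
  rw [Fintype.card_fin]
  have h : d + 1 + m - 1 = m + d := by omega
  rw [h, Nat.choose_symm_add]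


end Counting

namespace DLL
open MvPolynomial
variable {d : ℕ}

variable {d : ℕ}

lemma irrefl (α : Fin d → ℕ) : ¬ degLexLt α α := by
  rintro (h | ⟨-, i, -, h⟩) <;> exact lt_irrefl _ h

lemma trichotomy {α β : Fin d → ℕ} (h : α ≠ β) : degLexLt α β ∨ degLexLt β α := by
  rcases lt_trichotomy (∑ j, α j) (∑ j, β j) with hs | hs | hs
  · exact Or.inl (Or.inl hs)
  · have hne : ∃ n, ∃ hn : n < d, α ⟨n, hn⟩ ≠ β ⟨n, hn⟩ := by
      by_contra hc
      push_neg at hc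
      exact h (funext fun j => hc j.1 j.2)
    classical
    obtain ⟨hn, hne'⟩ := Nat.find_spec hne
    set i : Fin d := ⟨Nat.find hne, hn⟩
    have hagr : ∀ j : Fin d, j < i → α j = β j := by
      intro j hj
      by_contra hcj
      exact Nat.find_min hne (m := j.1) hj ⟨j.2, by simpa using hcj⟩
    rcases lt_or_gt_of_ne hne' with hlt | hlt
    · exact Or.inr (Or.inr ⟨hs.symm, i, fun j hj => (hagr j hj).symm, hlt⟩)
    · exact Or.inl (Or.inr ⟨hs, i, hagr, hlt⟩)
  · exact Or.inr (Or.inl hs)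

lemma trans {α β γ : Fin d → ℕ} (h1 : degLexLt α β) (h2 : degLexLt β γ) :
    degLexLt α γ := by
  rcases h1 with h1 | ⟨e1, i1, ha1, hl1⟩
  · rcases h2 with h2 | ⟨e2, -⟩
    · exact Or.inl (h1.trans h2)
    · exact Or.inl (e2 ▸ h1)
  · rcases h2 with h2 | ⟨e2, i2, ha2, hl2⟩
    · exact Or.inl (e1 ▸ h2)
    · refine Or.inr ⟨e1.trans e2, ?_⟩
      rcases lt_trichotomy i1 i2 with hi | hi | hi
      · exact ⟨i1, fun j hj => (ha1 j hj).trans (ha2 j (hj.trans hi)), (ha2 i1 hi) ▸ hl1⟩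
      · exact ⟨i1, fun j hj => (ha1 j hj).trans (ha2 j (hi ▸ hj)), hi ▸ (hl2.trans (hi ▸ hl1))⟩
      · exact ⟨i2, fun j hj => (ha1 j (hj.trans hi)).trans (ha2 j hj), hl2.trans_le ((ha1 i2 hi).symm ▸ le_rfl)⟩

lemma deg_le {α β : Fin d → ℕ} (h : degLexLt α β) : (∑ j, α j) ≤ (∑ j, β j) := by
  rcases h with h | ⟨h, -⟩
  exacts [h.le, h.le]

lemma finite_pred (α : Fin d → ℕ) : {β : Fin d → ℕ | degLexLt β α}.Finite := by
  apply Set.Finite.subset (Set.Finite.pi (fun j : Fin d => Set.finite_Iic (∑ j, α j)))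
  intro β hβ
  have hβs : (∑ j, β j) ≤ ∑ j, α j := deg_le hβ
  intro j _
  exact le_trans (Finset.single_le_sum (f := β) (fun _ _ => Nat.zero_le _) (Finset.mem_univ j)) hβs



variable {d : ℕ}

lemma monRank_eq (α : Fin d → ℕ) : monRank d α = {β : Fin d → ℕ | degLexLt β α}.ncard :=
  Nat.card_coe_set_eq _

lemma strictMono {α β : Fin d → ℕ} (h : degLexLt α β) : monRank d α < monRank d β := by
  rw [monRank_eq, monRank_eq]
  apply Set.ncard_lt_ncard _ (finite_pred β)
  constructor
  · exact fun γ hγ => trans hγ h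
  · intro hsub
    exact irrefl α (hsub h)

lemma injective : Function.Injective (monRank d) := by
  intro α β h
  by_contra hne
  rcases trichotomy hne with hl | hl
  · exact absurd h (Nat.ne_of_lt (strictMono hl))
  · exact absurd h.symm (Nat.ne_of_lt (strictMono hl))

lemma monRank_zero : monRank d (fun _ => 0) = 0 := by
  rw [monRank_eq]
  have h0 : {β : Fin d → ℕ | degLexLt β (fun _ => 0)} = ∅ := by
    ext β
    simp only [Set.mem_setOf_eq, Set.mem_empty_iff_false, iff_false]
    rintro (h | ⟨h, i, -, hi⟩) <;> simp_all
  rw [h0, Set.ncard_empty]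

lemma exists_succ (hd : 0 < d) (α : Fin d → ℕ) :
    ∃ α', monRank d α' = monRank d α + 1 := by
  classical
  set D := ∑ j, α j with hD
  set T : Set (Fin d → ℕ) := {γ | degLexLt α γ ∧ (∑ j, γ j) ≤ D + 1} with hT
  have hTfin : T.Finite := by
    apply Set.Finite.subset (Set.Finite.pi (fun j : Fin d => Set.finite_Iic (D + 1)))
    rintro γ ⟨-, hγ⟩ j -
    exact le_trans (Finset.single_le_sum (f := γ) (fun _ _ => Nat.zero_le _) (Finset.mem_univ j)) hγ
  have hTne : T.Nonempty := by
    refine ⟨fun j => if j = ⟨0, hd⟩ then D + 1 else 0, ?_, ?_⟩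
    · exact Or.inl (by simp [Finset.sum_ite_eq', hD])
    · simp [Finset.sum_ite_eq']
  obtain ⟨γ, hγT, hγmin⟩ := Set.Finite.exists_minimalFor (monRank d) T hTfin hTne
  have hmin : ∀ γ' ∈ T, ¬ degLexLt γ' γ := by
    intro γ' hγ' hlt
    have := hγmin hγ' (le_of_lt (strictMono hlt))
    exact absurd (strictMono hlt) (not_lt.mpr this)
  refine ⟨γ, ?_⟩
  have hset : {β : Fin d → ℕ | degLexLt β γ} = insert α {β | degLexLt β α} := by
    ext β
    simp only [Set.mem_setOf_eq, Set.mem_insert_iff]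
    constructor
    · intro hβ
      by_cases hba : β = α
      · exact Or.inl hba
      rcases trichotomy hba with h | h
      · exact Or.inr h
      · exfalso
        apply hmin β ⟨h, le_trans (deg_le hβ) hγT.2⟩ hβ
    · rintro (rfl | hβ)
      · exact hγT.1
      · exact trans hβ hγT.1
  rw [monRank_eq, monRank_eq, hset,
    Set.ncard_insert_of_notMem (show α ∉ {β : Fin d → ℕ | degLexLt β α} from irrefl α)
      (finite_pred α)]

lemma surjective (hd : 0 < d) : Function.Surjective (monRank d) := by
  intro n
  induction n with
  | zero => exact ⟨fun _ => 0, monRank_zero⟩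
  | succ n ih =>
    obtain ⟨α, hα⟩ := ih
    obtain ⟨α', hα'⟩ := exists_succ hd α
    exact ⟨α', by rw [hα', hα]⟩



variable {d : ℕ}

lemma finite_degLe (m : ℕ) : {β : Fin d → ℕ | (∑ j, β j) ≤ m}.Finite := by
  apply Set.Finite.subset (Set.Finite.pi (fun j : Fin d => Set.finite_Iic m))
  intro β hβ j _
  exact le_trans (Finset.single_le_sum (f := β) (fun _ _ => Nat.zero_le _) (Finset.mem_univ j)) hβ

lemma ncard_degLe (m : ℕ) :
    {β : Fin d → ℕ | (∑ j, β j) ≤ m}.ncard = (m + d).choose d := by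
  rw [← Nat.card_coe_set_eq]
  exact card_degLe d m

lemma rank_lt_iff (α : Fin d → ℕ) (m : ℕ) :
    monRank d α < (m + d).choose d ↔ (∑ j, α j) ≤ m := by
  constructor
  · intro h
    by_contra hc
    push_neg at hc
    have hsub : {β : Fin d → ℕ | (∑ j, β j) ≤ m} ⊆ {β : Fin d → ℕ | degLexLt β α} :=
      fun β hβ => Or.inl (lt_of_le_of_lt hβ hc)
    have := Set.ncard_le_ncard hsub (finite_pred α)
    rw [ncard_degLe, ← monRank_eq] at this
    omega
  · intro h
    rw [monRank_eq, ← ncard_degLe (d := d) m]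
    apply Set.ncard_lt_ncard _ (finite_degLe m)
    constructor
    · exact fun β hβ => le_trans (deg_le hβ) h
    · intro hsub
      exact irrefl α (hsub h)

lemma monRank_monExp (hd : 0 < d) (n : ℕ) : monRank d (monExp d n) = n :=
  Function.rightInverse_invFun (surjective hd) n

/-- weight of the n-th monomial -/
def w (d n : ℕ) : ℕ := ∑ j, monExp d n j

lemma w_le_iff (hd : 0 < d) (n m : ℕ) : n < (m + d).choose d ↔ w d n ≤ m := by
  have := rank_lt_iff (monExp d n) m
  rw [monRank_monExp hd] at this
  exact this

lemma w_eq (hd : 0 < d) {m n : ℕ} (h1 : (m + d).choose d ≤ n) (h2 : n < (m + d + 1).choose d) :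
    w d n = m + 1 := by
  have ha : ¬ (w d n ≤ m) := by
    rw [← w_le_iff hd]
    omega
  have hb : w d n ≤ m + 1 := by
    rw [← w_le_iff hd]
    have : m + 1 + d = m + d + 1 := by omega
    rw [this]
    exact h2
  omega

lemma stepN (hd : 0 < d) (m N : ℕ) (h1 : (m + d).choose d ≤ N) (h2 : N ≤ (m + d + 1).choose d) :
    ∑ i ∈ Finset.range N, w d i =
      (∑ i ∈ Finset.range ((m + d).choose d), w d i) + (N - (m + d).choose d) * (m + 1) := by
  rw [Finset.range_eq_Ico, ← Finset.sum_Ico_consecutive _ (Nat.zero_le _) h1,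
    ← Finset.range_eq_Ico]
  congr 1
  rw [Finset.sum_congr rfl (fun i hi => ?_), Finset.sum_const, Nat.card_Ico, smul_eq_mul]
  rw [Finset.mem_Ico] at hi
  exact w_eq hd hi.1 (lt_of_lt_of_le hi.2 h2)

lemma sumA (hd : 0 < d) (m : ℕ) :
    (∑ i ∈ Finset.range ((m + d).choose d), w d i) + (m + d).choose (d + 1) =
      (m + d).choose d * m := by
  induction m with
  | zero =>
    rw [Nat.zero_add, Nat.choose_self, Nat.choose_eq_zero_of_lt (by omega)]
    have hw0 : w d 0 = 0 := by
      have := (w_le_iff hd 0 0).mp (by rw [Nat.zero_add, Nat.choose_self]; omega)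
      omega
    simp [hw0]
  | succ m ih =>
    have hle : (m + d).choose d ≤ (m + d + 1).choose d := Nat.choose_le_choose d (by omega)
    have hstep := stepN hd m ((m + d + 1).choose d) hle le_rfl
    have hms : m + 1 + d = m + d + 1 := by omega
    rw [hms, hstep, Nat.choose_succ_succ (m + d) d]
    set C := (m + d).choose d
    set B := (m + d).choose (d + 1)
    set N1 := (m + d + 1).choose d
    calc (∑ i ∈ Finset.range C, w d i) + (N1 - C) * (m + 1) + (C + B)
        = ((∑ i ∈ Finset.range C, w d i) + B) + ((N1 - C) * (m + 1) + C) := by ring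
      _ = C * m + ((N1 - C) * (m + 1) + C) := by rw [ih]
      _ = C * (m + 1) + (N1 - C) * (m + 1) := by ring
      _ = (C + (N1 - C)) * (m + 1) := by rw [Nat.add_mul]
      _ = N1 * (m + 1) := by rw [Nat.add_sub_cancel' hle]

lemma key (hd : 0 < d) (m N : ℕ) (h1 : (m + d).choose d ≤ N) (h2 : N ≤ (m + d + 1).choose d) :
    (∑ i ∈ Finset.range N, w d i) + (m + d + 1).choose (d + 1) = N * (m + 1) := by
  rw [stepN hd m N h1 h2, Nat.choose_succ_succ (m + d) d]
  set C := (m + d).choose d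
  set B := (m + d).choose (d + 1)
  calc (∑ i ∈ Finset.range C, w d i) + (N - C) * (m + 1) + (C + B)
      = ((∑ i ∈ Finset.range C, w d i) + B) + ((N - C) * (m + 1) + C) := by ring
    _ = C * m + ((N - C) * (m + 1) + C) := by rw [sumA hd m]
    _ = C * (m + 1) + (N - C) * (m + 1) := by ring
    _ = (C + (N - C)) * (m + 1) := by rw [Nat.add_mul]
    _ = N * (m + 1) := by rw [Nat.add_sub_cancel' h1]




lemma monExp_inj {d : ℕ} (hd : 0 < d) : Function.Injective (monExp d) := by
  intro a b h
  rw [← monRank_monExp hd a, ← monRank_monExp hd b, h]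

variable {d N : ℕ}

/-- the exponent of the monomial attached to σ -/
def E (d N : ℕ) (σ : Equiv.Perm (Fin N)) : (Fin N × Fin d) →₀ ℕ :=
  Finsupp.equivFunOnFinite.symm (fun p => monExp d ((σ p.1 : Fin N) : ℕ) p.2)

lemma prod_X_pow {τ : Type*} [Fintype τ] [DecidableEq τ] (f : τ → ℕ) :
    (∏ p : τ, (X p : MvPolynomial τ ℝ) ^ f p) =
      monomial (Finsupp.equivFunOnFinite.symm f) 1 := by
  rw [← MvPolynomial.prod_X_pow_eq_monomial]
  symm
  apply Finset.prod_subset (Finset.subset_univ _)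
  intro x _ hx
  have : (Finsupp.equivFunOnFinite.symm f) x = 0 := by
    simpa using (Finsupp.notMem_support_iff.mp hx)
  rw [this, pow_zero]

lemma psi_eq : psi d N = ∑ σ : Equiv.Perm (Fin N),
    monomial (E d N σ) (((Equiv.Perm.sign σ : ℤ) : ℝ)) := by
  rw [psi, Matrix.det_apply']
  apply Finset.sum_congr rfl
  intro σ _
  have h1 : (∏ j : Fin N, Matrix.of (fun i j : Fin N =>
      ∏ k : Fin d, (X (j, k) : MvPolynomial (Fin N × Fin d) ℝ) ^ monExp d (i : ℕ) k) (σ j) j)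
      = ∏ p : Fin N × Fin d, (X p : MvPolynomial (Fin N × Fin d) ℝ) ^ monExp d ((σ p.1 : Fin N) : ℕ) p.2 := by
    rw [Fintype.prod_prod_type]
    rfl
  rw [h1, prod_X_pow, ← map_intCast (MvPolynomial.C (σ := Fin N × Fin d) (R := ℝ)),
    MvPolynomial.C_mul_monomial, mul_one]
  rfl

lemma E_inj (hd : 0 < d) : Function.Injective (E d N) := by
  intro σ τ h
  have h' : ∀ p : Fin N × Fin d,
      monExp d ((σ p.1 : Fin N) : ℕ) p.2 = monExp d ((τ p.1 : Fin N) : ℕ) p.2 := by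
    intro p
    have := congrArg (fun e => Finsupp.equivFunOnFinite e p) h
    simpa [E] using this
  ext j
  have hfun : monExp d ((σ j : Fin N) : ℕ) = monExp d ((τ j : Fin N) : ℕ) :=
    funext fun k => h' (j, k)
  have := monExp_inj hd hfun
  exact this

lemma coeff_E_one (hd : 0 < d) : MvPolynomial.coeff (E d N 1) (psi d N) = 1 := by
  rw [psi_eq, MvPolynomial.coeff_sum]
  rw [Finset.sum_eq_single 1]
  · simp [MvPolynomial.coeff_monomial]
  · intro σ _ hσ
    rw [MvPolynomial.coeff_monomial, if_neg, ]
    exact fun hc => hσ (E_inj hd hc)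
  · intro h
    exact absurd (Finset.mem_univ 1) h

lemma sum_E (σ : Equiv.Perm (Fin N)) :
    ((E d N σ).sum fun _ e => e) = ∑ j : Fin N, w d (j : ℕ) := by
  rw [Finsupp.sum_fintype _ _ (fun _ => rfl)]
  have hE : ∀ p : Fin N × Fin d, (E d N σ) p = monExp d ((σ p.1 : Fin N) : ℕ) p.2 :=
    fun p => by simp [E]
  rw [Finset.sum_congr rfl (fun p _ => hE p)]
  rw [Fintype.sum_prod_type' (f := fun (j : Fin N) (k : Fin d) => monExp d ((σ j : Fin N) : ℕ) k)]
  have h2 : ∀ j : Fin N, ∑ k : Fin d, monExp d ((σ j : Fin N) : ℕ) k = w d ((σ j : Fin N) : ℕ) :=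
    fun j => rfl
  simp_rw [h2]
  exact Equiv.sum_comp σ (fun j : Fin N => w d (j : ℕ))

lemma totalDegree_psi (hd : 0 < d) :
    (psi d N).totalDegree = ∑ j : Fin N, w d (j : ℕ) := by
  apply le_antisymm
  · rw [psi_eq]
    refine le_trans (MvPolynomial.totalDegree_finset_sum _ _) (Finset.sup_le fun σ _ => ?_)
    refine le_trans (MvPolynomial.totalDegree_monomial_le _ _) ?_
    rw [show ((E d N σ).sum fun _ => id) = ((E d N σ).sum fun _ e => e) from rfl, sum_E]
  · have hmem : E d N 1 ∈ (psi d N).support := by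
      rw [MvPolynomial.mem_support_iff, coeff_E_one hd]
      exact one_ne_zero
    have := MvPolynomial.le_totalDegree hmem
    rwa [sum_E] at this


end DLL

/-- The value of `𝒱_d(N)` for intermediate `N`: if `N_m^{(d)} ≤ N ≤ N_{m+1}^{(d)}`, where
`N_m^{(d)} = C(m+d, d)`, then `𝒱_d(N) = N(m+1) − ((m+d+1)/(d+1))·N_m^{(d)}`. -/
theorem degV_intermediate (d m N : ℕ) (hd : 1 ≤ d)
    (h₁ : Nat.choose (m + d) d ≤ N) (h₂ : N ≤ Nat.choose (m + d + 1) d) :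
    (degV d N : ℝ) =
      (N : ℝ) * ((m : ℝ) + 1) -
        ((m : ℝ) + (d : ℝ) + 1) / ((d : ℝ) + 1) * (Nat.choose (m + d) d : ℝ) := by
  have hd0 : 0 < d := hd
  have hdeg : degV d N = ∑ i ∈ Finset.range N, DLL.w d i := by
    rw [degV, DLL.totalDegree_psi hd0, ← Fin.sum_univ_eq_sum_range]
  have hkey := DLL.key hd0 m N h₁ h₂
  rw [← hdeg] at hkey
  have hcast : (degV d N : ℝ) + ((m + d + 1).choose (d + 1) : ℝ) = (N : ℝ) * ((m : ℝ) + 1) := by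
    exact_mod_cast congrArg (Nat.cast : ℕ → ℝ) hkey
  have hid : ((m : ℝ) + (d : ℝ) + 1) * ((m + d).choose d : ℝ)
      = ((m + d + 1).choose (d + 1) : ℝ) * ((d : ℝ) + 1) := by
    have := Nat.add_one_mul_choose_eq (m + d) d
    exact_mod_cast congrArg (Nat.cast : ℕ → ℝ) this
  have hd1 : (d : ℝ) + 1 ≠ 0 := by positivity
  field_simp
  nlinarith [hcast, hid]
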